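/- Let q, d, ℓ be positive integers with ℓ ≥ 2 and q ≥ d + 2. Define NUR(d,ℓ,q) as the set of d×ℓ matrices M over [q] such that NOT all columns of M consist of d distinct elements with all columns having the same set of elements. Then an OR relation of arity d·ℓ is definable from NUR(d,ℓ,q): there exist a matrix α ∈ [q]^{d×ℓ} and elements β_{i,j} ∈ [q] with β_{i,j} ≠ α_{i,j} for all (i,j), such that every matrix M with M_{i,j} ∈ {α_{i,j}, β_{i,j}} for all (i,j) belongs to NUR(d,ℓ,q), except M = α itself. -/
import Mathlib


/-- A `d × l` matrix over `Fin q` is uniformly rainbow if each column has pairwise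
distinct entries and all columns have the same set of entries. `NUR` is its complement. -/
def UniformlyRainbow {d l q : ℕ} (M : Fin d → Fin l → Fin q) : Prop :=
  (∀ j, Function.Injective fun i => M i j) ∧
  ∀ j j' : Fin l, (Finset.univ.image fun i => M i j) = Finset.univ.image fun i => M i j'

/-- If `l ≥ 2` and `q ≥ d + 2`, an OR relation of arity `d·l` is definable from
`NUR(d,l,q)`: there are matrices `α` and entrywise-different `β` so that every matrix
with entries chosen from `{α, β}` is not uniformly rainbow, except `α` itself. -/
theorem stmt0 (d l q : ℕ) (hd : 0 < d) (hl : 2 ≤ l) (hq : d + 2 ≤ q) :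
    ∃ α β : Fin d → Fin l → Fin q,
      (∀ i j, β i j ≠ α i j) ∧
      ∀ M : Fin d → Fin l → Fin q,
        (∀ i j, M i j = α i j ∨ M i j = β i j) →
        (¬ UniformlyRainbow M ↔ M ≠ α) := by
  have hdq : d ≤ q := by omega
  refine ⟨fun i _ => ⟨i.val, lt_of_lt_of_le i.isLt hdq⟩,
    fun _ j => ⟨d + j.val % 2, by omega⟩, ?_, ?_⟩
  · intro i j
    simp only [ne_eq, Fin.ext_iff]
    omega
  · intro M hM
    constructor
    · intro hnur
      intro hMa
      apply hnur
      subst hMa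
      constructor
      · intro j a b hab
        simpa [Fin.ext_iff] using hab
      · intro j j'
        rfl
    · intro hMa hur
      obtain ⟨hinj, himg⟩ := hur
      -- there is a flipped entry
      have : ∃ i j, (M i j).val = d + j.val % 2 := by
        by_contra h
        push_neg at h
        apply hMa
        funext i j
        rcases hM i j with h1 | h1
        · exact h1
        · exact absurd (by rw [h1]) (h i j)
      obtain ⟨i, j, hij⟩ := this
      -- a column of opposite parity
      have h1l : 1 < l := hl
      have h0l : 0 < l := by omega
      set j' : Fin l := if j.val % 2 = 0 then ⟨1, h1l⟩ else ⟨0, h0l⟩ with hj'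
      have hpar : j'.val % 2 ≠ j.val % 2 := by
        rcases eq_or_ne (j.val % 2) 0 with h | h <;> simp [hj', h] <;> omega
      have hmem : M i j ∈ Finset.univ.image fun i => M i j :=
        Finset.mem_image_of_mem _ (Finset.mem_univ i)
      rw [himg j j'] at hmem
      obtain ⟨i', _, hi'⟩ := Finset.mem_image.mp hmem
      have : (M i' j').val = d + j.val % 2 := by rw [hi', hij]
      rcases hM i' j' with h2 | h2
      · have := h2 ▸ this
        simp only [Fin.val_mk] at this
        have : i'.val < d := i'.isLt
        omega
      · have := h2 ▸ this
        simp only [Fin.val_mk] at this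
        omega
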